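/- arXiv:2504.10305 — 3 statements merged into one kernel-verified Lean document; each statement's English description precedes it below -/
import Mathlib

section
/- Let L be a Lie algebra over a commutative ring with unit and q_1,…,q_m ∈ L. Every nested commutator without repeats ⁅q_{i_1}, ⁅…⁅q_{i_k}, q_j⁆…⁆⁆ (where k ≥ 1 and the indices i_1,…,i_k, j ∈ [m] are pairwise distinct) lies in the Lie subalgebra of L generated by the set of all elements c_q(I, q_i) with I ⊆ [m] nonempty, i ∈ [m], and max(I) > i. -/
/-- For `q : Fin m → L` and `I = {t₁ < t₂ < … < t_s} ⊆ [m]`, the nested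
commutator `c_q(I, x) = ⁅q t₁, ⁅q t₂, … ⁅q t_s, x⁆…⁆⁆`, with `c_q(∅, x) = x`. -/
def cNest {L : Type*} [LieRing L] {m : ℕ} (q : Fin m → L) (I : Finset (Fin m)) (x : L) : L :=
  (I.sort (· ≤ ·)).foldr (fun t acc => ⁅q t, acc⁆) x

section Aux

variable {R : Type*} {L : Type*} [CommRing R] [LieRing L] [LieAlgebra R L] {m : ℕ}

lemma cNest_insert (q : Fin m → L) {I : Finset (Fin m)} {a : Fin m}
    (h : ∀ b ∈ I, a < b) (ha : a ∉ I) (x : L) :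
    cNest q (insert a I) x = ⁅q a, cNest q I x⁆ := by
  unfold cNest
  rw [Finset.sort_insert _ (fun b hb => (h b hb).le) ha]
  rfl

lemma cNest_singleton (q : Fin m → L) (a : Fin m) (x : L) :
    cNest q {a} x = ⁅q a, x⁆ := by
  unfold cNest
  rw [Finset.sort_singleton]
  rfl

lemma cNest_pair (q : Fin m → L) {a b : Fin m} (hab : a < b) (x : L) :
    cNest q {a, b} x = ⁅q a, ⁅q b, x⁆⁆ := by
  rw [show ({a, b} : Finset (Fin m)) = insert a {b} from rfl,
    cNest_insert q (by simpa using hab) (by simp [hab.ne]), cNest_singleton]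

/-- Repeat-free generators with letters in `A`. -/
def genSet (q : Fin m → L) (A : Finset (Fin m)) : Set L :=
  {z | ∃ (I : Finset (Fin m)) (hI : I.Nonempty) (i : Fin m),
    I ⊆ A ∧ i ∈ A ∧ i ∉ I ∧ i < I.max' hI ∧ z = cNest q I (q i)}

def SA (R : Type*) [CommRing R] [LieAlgebra R L] (q : Fin m → L) (A : Finset (Fin m)) :
    LieSubalgebra R L :=
  LieSubalgebra.lieSpan R L (genSet q A)

lemma genSet_mono (q : Fin m → L) {A B : Finset (Fin m)} (h : A ⊆ B) :
    genSet q A ⊆ genSet q B := by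
  rintro z ⟨I, hI, i, hIA, hiA, hiI, hlt, rfl⟩
  exact ⟨I, hI, i, hIA.trans h, h hiA, hiI, hlt, rfl⟩

lemma SA_mono (q : Fin m → L) {A B : Finset (Fin m)} (h : A ⊆ B) :
    SA R q A ≤ SA R q B :=
  LieSubalgebra.lieSpan_mono (genSet_mono q h)

lemma mem_SA_gen (q : Fin m → L) {A I : Finset (Fin m)} {i : Fin m} (hI : I.Nonempty)
    (hIA : I ⊆ A) (hiA : i ∈ A) (hiI : i ∉ I) (hlt : i < I.max' hI) :
    cNest q I (q i) ∈ SA R q A :=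
  LieSubalgebra.subset_lieSpan ⟨I, hI, i, hIA, hiA, hiI, hlt, rfl⟩

lemma key (q : Fin m → L) :
    ∀ (n : ℕ) (A : Finset (Fin m)) (a : Fin m),
      A.card * (m + 1) + (A.filter (· < a)).card ≤ n → a ∉ A →
      ∀ x ∈ SA R q A, ⁅q a, x⁆ ∈ SA (L := L) R q (insert a A) := by
  intro n
  induction n using Nat.strong_induction_on with
  | _ n IH =>
  intro A a hn ha x hx
  -- the set of elements of `SA A` whose bracket with `q a` is in `SA (insert a A)`
  -- is a Lie subalgebra
  let K : LieSubalgebra R L :=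
    { carrier := {y | y ∈ SA R q A ∧ ⁅q a, y⁆ ∈ SA (L := L) R q (insert a A)}
      add_mem' := by
        rintro y z ⟨hy1, hy2⟩ ⟨hz1, hz2⟩
        exact ⟨add_mem hy1 hz1, by rw [lie_add]; exact add_mem hy2 hz2⟩
      zero_mem' := ⟨zero_mem _, by rw [lie_zero]; exact zero_mem _⟩
      smul_mem' := by
        rintro c y ⟨hy1, hy2⟩
        exact ⟨Submodule.smul_mem _ c hy1, by rw [lie_smul]; exact Submodule.smul_mem _ c hy2⟩
      lie_mem' := by
        rintro y z ⟨hy1, hy2⟩ ⟨hz1, hz2⟩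
        refine ⟨(SA R q A).lie_mem hy1 hz1, ?_⟩
        rw [leibniz_lie]
        exact add_mem ((SA R q (insert a A)).lie_mem hy2
            (SA_mono q (Finset.subset_insert a A) hz1))
          ((SA R q (insert a A)).lie_mem (SA_mono q (Finset.subset_insert a A) hy1) hz2) }
  suffices h : SA R q A ≤ K by exact (h hx).2
  refine LieSubalgebra.lieSpan_le.mpr ?_
  rintro z ⟨I, hI, i, hIA, hiA, hiI, hlt, rfl⟩
  refine ⟨mem_SA_gen q hI hIA hiA hiI hlt, ?_⟩
  have hai : a ≠ i := fun h => ha (h ▸ hiA)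
  have haI : a ∉ I := fun h => ha (hIA h)
  by_cases hBA : insert i I = A
  case neg =>
    -- reduce to the case `A = I ∪ {i}`, with smaller measure
    set B := insert i I with hB
    have hBsub : B ⊆ A := Finset.insert_subset hiA hIA
    have hBlt : B.card < A.card := Finset.card_lt_card (lt_of_le_of_ne hBsub hBA)
    have haB : a ∉ B := fun h => ha (hBsub h)
    have hmeas : B.card * (m + 1) + (B.filter (· < a)).card < n := by
      have h1 : (B.filter (· < a)).card ≤ m := by
        calc (B.filter (· < a)).card ≤ B.card := Finset.card_filter_le _ _
        _ ≤ Fintype.card (Fin m) := Finset.card_le_univ _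
        _ = m := Fintype.card_fin m
      calc B.card * (m + 1) + (B.filter (· < a)).card
          < B.card * (m + 1) + (m + 1) := by omega
        _ = (B.card + 1) * (m + 1) := by ring
        _ ≤ A.card * (m + 1) := Nat.mul_le_mul_right _ (by omega)
        _ ≤ n := le_trans (Nat.le_add_right _ _) hn
    have hz : cNest q I (q i) ∈ SA R q B :=
      mem_SA_gen q hI (Finset.subset_insert _ _) (Finset.mem_insert_self _ _) hiI hlt
    exact SA_mono q (Finset.insert_subset_insert a hBsub)
      (IH _ hmeas B a le_rfl haB _ hz)
  case pos =>
    set t₁ := I.min' hI with ht₁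
    have ht₁I : t₁ ∈ I := I.min'_mem hI
    have hat₁ : a ≠ t₁ := fun h => haI (h ▸ ht₁I)
    rcases hat₁.lt_or_gt with hlt₁ | hgt₁
    · -- a < min I : direct generator
      have heq : ⁅q a, cNest q I (q i)⁆ = cNest q (insert a I) (q i) :=
        (cNest_insert q (fun b hb => lt_of_lt_of_le hlt₁ (I.min'_le b hb)) haI _).symm
      rw [heq]
      refine mem_SA_gen q (Finset.insert_nonempty _ _)
        (Finset.insert_subset_insert a hIA) (Finset.mem_insert_of_mem hiA)
        (by simp [hai.symm, hiI]) ?_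
      exact lt_of_lt_of_le hlt (Finset.le_max' _ _ (Finset.mem_insert_of_mem (I.max'_mem hI)))
    · -- min I < a
      by_cases hcard : I.card = 1
      · -- I = {t₁}
        obtain ⟨b, hIt⟩ := Finset.card_eq_one.mp hcard
        have ht₁b : t₁ = b :=
          Finset.mem_singleton.mp ((Finset.ext_iff.mp hIt t₁).mp ht₁I)
        have hmaxb : I.max' hI = t₁ := by
          have h5 := Finset.mem_singleton.mp ((Finset.ext_iff.mp hIt _).mp (I.max'_mem hI))
          rw [h5, ht₁b]
        have hit₁ : i < t₁ := hmaxb ▸ hlt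
        have hz : cNest q I (q i) = ⁅q t₁, q i⁆ := by
          rw [hIt, cNest_singleton, ← ht₁b]
        rw [hz, leibniz_lie]
        refine add_mem ?_ ?_
        · -- ⁅⁅q a, q t₁⁆, q i⁆ = -⁅q i, ⁅q a, q t₁⁆⁆ = -cNest {i,a} (q t₁)
          have h1 : ⁅⁅q a, q t₁⁆, q i⁆ = -cNest q {i, a} (q t₁) := by
            rw [cNest_pair q (hit₁.trans hgt₁), ← lie_skew]
          rw [h1]
          refine neg_mem (mem_SA_gen q (Finset.insert_nonempty _ _) ?_ ?_ ?_ ?_)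
          · exact Finset.insert_subset (Finset.mem_insert_of_mem hiA)
              (Finset.singleton_subset_iff.mpr (Finset.mem_insert_self a A))
          · exact Finset.mem_insert_of_mem (hIA ht₁I)
          · simp only [Finset.mem_insert, Finset.mem_singleton]
            push_neg
            exact ⟨hit₁.ne', hgt₁.ne⟩
          · exact lt_of_lt_of_le hgt₁ (Finset.le_max' _ _ (by simp))
        · -- ⁅q t₁, ⁅q a, q i⁆⁆ = cNest {t₁, a} (q i)
          have h2 : ⁅q t₁, ⁅q a, q i⁆⁆ = cNest q {t₁, a} (q i) :=
            (cNest_pair q hgt₁ _).symm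
          rw [h2]
          refine mem_SA_gen q (Finset.insert_nonempty _ _) ?_ ?_ ?_ ?_
          · exact Finset.insert_subset (Finset.mem_insert_of_mem (hIA ht₁I))
              (Finset.singleton_subset_iff.mpr (Finset.mem_insert_self a A))
          · exact Finset.mem_insert_of_mem hiA
          · simp only [Finset.mem_insert, Finset.mem_singleton]
            push_neg
            exact ⟨hit₁.ne, (hit₁.trans hgt₁).ne⟩
          · exact lt_of_lt_of_le (hit₁.trans hgt₁) (Finset.le_max' _ _ (by simp))
      · -- |I| ≥ 2
        have hcard2 : 2 ≤ I.card := by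
          have := Finset.card_pos.mpr hI
          omega
        set I' := I.erase t₁ with hI'def
        have hI'card : I'.card = I.card - 1 := Finset.card_erase_of_mem ht₁I
        have hI' : I'.Nonempty := Finset.card_pos.mp (by omega)
        have ht₁I' : t₁ ∉ I' := Finset.notMem_erase _ _
        have ht₁lt : ∀ b ∈ I', t₁ < b := fun b hb =>
          lt_of_le_of_ne (I.min'_le b (Finset.mem_of_mem_erase hb))
            (Ne.symm (Finset.ne_of_mem_erase hb))
        have hmaxmem : I.max' hI ∈ I' :=
          Finset.mem_erase.mpr ⟨(I.min'_lt_max'_of_card (by omega)).ne', I.max'_mem hI⟩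
        have hilt' : i < I'.max' hI' := lt_of_lt_of_le hlt (Finset.le_max' _ _ hmaxmem)
        have hiI' : i ∉ I' := fun h => hiI (Finset.mem_of_mem_erase h)
        have hzX : cNest q I (q i) = ⁅q t₁, cNest q I' (q i)⁆ := by
          conv_lhs => rw [← Finset.insert_erase ht₁I]
          exact cNest_insert q ht₁lt ht₁I' _
        set X := cNest q I' (q i) with hXdef
        set B' := insert i I' with hB'def
        have hXmem : X ∈ SA R q B' :=
          mem_SA_gen q hI' (Finset.subset_insert _ _) (Finset.mem_insert_self _ _) hiI' hilt'
        have haB' : a ∉ B' := by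
          simp only [hB'def, Finset.mem_insert]
          push_neg
          exact ⟨hai, fun h => haI (Finset.mem_of_mem_erase h)⟩
        have hB'card : B'.card = I.card := by
          rw [hB'def, Finset.card_insert_of_notMem hiI', hI'card]
          omega
        have hAcard : A.card = I.card + 1 := by
          rw [← hBA, Finset.card_insert_of_notMem hiI]
        -- step 1
        have hmeas1 : B'.card * (m + 1) + (B'.filter (· < a)).card < n := by
          have h1 : (B'.filter (· < a)).card ≤ m := by
            calc (B'.filter (· < a)).card ≤ B'.card := Finset.card_filter_le _ _
              _ ≤ Fintype.card (Fin m) := Finset.card_le_univ _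
              _ = m := Fintype.card_fin m
          calc B'.card * (m + 1) + (B'.filter (· < a)).card
              < B'.card * (m + 1) + (m + 1) := by omega
            _ = (B'.card + 1) * (m + 1) := by ring
            _ = A.card * (m + 1) := by rw [hB'card, hAcard]
            _ ≤ n := le_trans (Nat.le_add_right _ _) hn
        have h1 : ⁅q a, X⁆ ∈ SA R q (insert a B') :=
          IH _ hmeas1 B' a le_rfl haB' X hXmem
        -- step 2
        set C := insert a B' with hCdef
        have ht₁C : t₁ ∉ C := by
          simp only [hCdef, hB'def, Finset.mem_insert]
          push_neg
          exact ⟨hat₁.symm, fun h => hiI (h ▸ ht₁I), ht₁I'⟩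
        have hCcard : C.card = A.card := by
          rw [hCdef, Finset.card_insert_of_notMem haB', hB'card, hAcard]
        have hrank : (C.filter (· < t₁)).card < (A.filter (· < a)).card := by
          have hit₁ : i ≠ t₁ := fun h => hiI (h ▸ ht₁I)
          rcases hit₁.lt_or_gt with hi | hi
          · -- i < t₁ : C.filter ⊆ {i}, A.filter ⊇ {i, t₁}
            have hsub : C.filter (· < t₁) ⊆ {i} := by
              intro b hb
              simp only [Finset.mem_filter, hCdef, hB'def, Finset.mem_insert] at hb
              obtain ⟨hb1 | hb2 | hb3, hblt⟩ := hb
              · exact absurd (hb1 ▸ hblt) (not_lt.mpr hgt₁.le)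
              · simp [hb2]
              · exact absurd hblt (not_lt.mpr (ht₁lt b hb3).le)
            have hsup : ({i, t₁} : Finset (Fin m)) ⊆ A.filter (· < a) := by
              intro b hb
              simp only [Finset.mem_insert, Finset.mem_singleton] at hb
              rcases hb with rfl | rfl
              · exact Finset.mem_filter.mpr ⟨hiA, hi.trans hgt₁⟩
              · exact Finset.mem_filter.mpr ⟨hIA ht₁I, hgt₁⟩
            calc (C.filter (· < t₁)).card ≤ 1 := by
                  simpa using Finset.card_le_card hsub
              _ < 2 := one_lt_two
              _ = ({i, t₁} : Finset (Fin m)).card := by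
                  rw [Finset.card_insert_of_notMem (by simpa using hit₁),
                    Finset.card_singleton]
              _ ≤ (A.filter (· < a)).card := Finset.card_le_card hsup
          · -- t₁ < i : C.filter = ∅, A.filter ∋ t₁
            have hempty : C.filter (· < t₁) = ∅ := by
              rw [Finset.eq_empty_iff_forall_notMem]
              intro b hb
              simp only [Finset.mem_filter, hCdef, hB'def, Finset.mem_insert] at hb
              obtain ⟨hb1 | hb2 | hb3, hblt⟩ := hb
              · exact absurd (hb1 ▸ hblt) (not_lt.mpr hgt₁.le)
              · exact absurd (hb2 ▸ hblt) (not_lt.mpr hi.le)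
              · exact absurd hblt (not_lt.mpr (ht₁lt b hb3).le)
            rw [hempty]
            refine Finset.card_pos.mpr ⟨t₁, Finset.mem_filter.mpr ⟨hIA ht₁I, hgt₁⟩⟩
        have hmeas2 : C.card * (m + 1) + (C.filter (· < t₁)).card < n := by
          calc C.card * (m + 1) + (C.filter (· < t₁)).card
              < A.card * (m + 1) + (A.filter (· < a)).card := by rw [hCcard]; omega
            _ ≤ n := hn
        have h2 : ⁅q t₁, ⁅q a, X⁆⁆ ∈ SA R q (insert t₁ C) :=
          IH _ hmeas2 C t₁ le_rfl ht₁C _ h1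
        have hset : insert t₁ C = insert a A := by
          rw [← hBA]
          ext b
          simp only [hCdef, hB'def, hI'def, Finset.mem_insert, Finset.mem_erase]
          constructor
          · rintro (rfl | rfl | rfl | ⟨_, hb⟩)
            · exact Or.inr (Or.inr ht₁I)
            · exact Or.inl rfl
            · exact Or.inr (Or.inl rfl)
            · exact Or.inr (Or.inr hb)
          · rintro (rfl | rfl | hb)
            · exact Or.inr (Or.inl rfl)
            · exact Or.inr (Or.inr (Or.inl rfl))
            · by_cases hbt : b = t₁
              · exact Or.inl hbt
              · exact Or.inr (Or.inr (Or.inr ⟨hbt, hb⟩))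
        rw [hzX, leibniz_lie]
        refine add_mem ?_ (hset ▸ h2)
        -- ⁅⁅q a, q t₁⁆, X⁆ : both factors lie in SA (insert a A)
        have hab : ⁅q a, q t₁⁆ ∈ SA (L := L) R q (insert a A) := by
          have : ⁅q a, q t₁⁆ = cNest q {a} (q t₁) := (cNest_singleton q a _).symm
          rw [this]
          refine mem_SA_gen q (Finset.singleton_nonempty _) ?_ ?_ ?_ ?_
          · exact Finset.singleton_subset_iff.mpr (Finset.mem_insert_self a A)
          · exact Finset.mem_insert_of_mem (hIA ht₁I)
          · simpa using hat₁.symm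
          · simpa using hgt₁
        have hX2 : X ∈ SA R q (insert a A) :=
          mem_SA_gen q hI'
            ((Finset.erase_subset _ _).trans (hIA.trans (Finset.subset_insert a A)))
            (Finset.mem_insert_of_mem hiA) hiI' hilt'
        exact (SA R q (insert a A)).lie_mem hab hX2

lemma words (q : Fin m → L) :
    ∀ (l : List (Fin m)), l ≠ [] → l.Nodup → ∀ j, j ∉ l →
      l.foldr (fun t acc => ⁅q t, acc⁆) (q j) ∈ SA (L := L) R q (insert j l.toFinset) := by
  intro l
  induction l with
  | nil => simp
  | cons a l ih =>
    intro _ hnd j hj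
    have haj : a ≠ j := fun h => hj (h ▸ (List.mem_cons_self : a ∈ a :: l))
    have hjl : j ∉ l := fun h => hj (List.mem_cons_of_mem a h)
    have hal : a ∉ l := (List.nodup_cons.mp hnd).1
    rcases List.eq_nil_or_concat' l with rfl | _
    · -- base case : ⁅q a, q j⁆
      simp only [List.foldr_cons, List.foldr_nil, List.toFinset_cons, List.toFinset_nil,
        insert_empty_eq]
      rcases haj.lt_or_gt with h | h
      · -- a < j
        have : ⁅q a, q j⁆ = -cNest q {j} (q a) := by
          rw [cNest_singleton, ← lie_skew]
        rw [this]
        refine neg_mem (mem_SA_gen q (Finset.singleton_nonempty _) ?_ ?_ ?_ ?_)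
        · exact Finset.singleton_subset_iff.mpr (Finset.mem_insert_self j _)
        · simp
        · simpa using haj
        · simpa using h
      · -- j < a
        have : ⁅q a, q j⁆ = cNest q {a} (q j) := (cNest_singleton q a _).symm
        rw [this]
        refine mem_SA_gen q (Finset.singleton_nonempty _) ?_ ?_ ?_ ?_
        · simp
        · exact Finset.mem_insert_self j _
        · simpa using haj.symm
        · simpa using h
    · have hlne : l ≠ [] := by rintro rfl; simp_all
      have hv : l.foldr (fun t acc => ⁅q t, acc⁆) (q j) ∈
          SA (L := L) R q (insert j l.toFinset) :=
        ih hlne (List.nodup_cons.mp hnd).2 j hjl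
      have haA : a ∉ insert j l.toFinset := by
        simp only [Finset.mem_insert, List.mem_toFinset]
        push_neg
        exact ⟨haj, hal⟩
      have := key (R := R) q _ (insert j l.toFinset) a le_rfl haA _ hv
      have hset : insert a (insert j l.toFinset) = insert j (a :: l).toFinset := by
        rw [List.toFinset_cons]
        exact Finset.insert_comm a j l.toFinset
      rw [List.foldr_cons]
      exact hset ▸ this

end Aux

/-- Let `L` be a Lie algebra over a commutative ring and
`q₁,…,q_m ∈ L`.  Every nested commutator without repeats
`⁅q_{i₁}, ⁅…⁅q_{i_k}, q_j⁆…⁆⁆` (`k ≥ 1`, indices pairwise distinct) lies in the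
Lie subalgebra of `L` generated by the elements `c_q(I, q_i)` with `I ⊆ [m]`
nonempty and `max I > i`. -/
theorem nestedCommutator_mem_lieSpan {R : Type*} {L : Type*} [CommRing R]
    [LieRing L] [LieAlgebra R L] {m : ℕ} (q : Fin m → L)
    (k : ℕ) (hk : 1 ≤ k) (is : Fin k → Fin m) (j : Fin m)
    (hdist : Function.Injective is) (hj : ∀ t, is t ≠ j) :
    (List.ofFn is).foldr (fun t acc => ⁅q t, acc⁆) (q j) ∈
      LieSubalgebra.lieSpan R L
        {z | ∃ (I : Finset (Fin m)) (hI : I.Nonempty) (i : Fin m),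
          i < I.max' hI ∧ z = cNest q I (q i)} := by
  have hne : List.ofFn is ≠ [] := by
    simp only [ne_eq, List.ofFn_eq_nil_iff]
    omega
  have hnd : (List.ofFn is).Nodup := List.nodup_ofFn.mpr hdist
  have hjn : j ∉ List.ofFn is := by
    simp only [List.mem_ofFn, Set.mem_range, not_exists]
    exact fun t h => hj t h
  have h := words (R := R) q (List.ofFn is) hne hnd j hjn
  refine LieSubalgebra.lieSpan_mono ?_ h
  rintro z ⟨I, hI, i, _, _, _, hlt, rfl⟩
  exact ⟨I, hI, i, hlt, rfl⟩
end

section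
/- Let K be a flag simplicial complex on [m], let L be a Lie algebra over a commutative ring with unit, and let q_1,…,q_m ∈ L satisfy ⁅q_i, q_j⁆ = 0 for every {i,j} ∈ K. Then every nested commutator without repeats ⁅q_{i_1}, ⁅…⁅q_{i_k}, q_j⁆…⁆⁆ (k ≥ 1, indices pairwise distinct) lies in the Lie subalgebra of L generated by the GPTW generators { c_q(J∖{j'}, q_{j'}) : J ⊆ [m], j' ∈ Θ_K(J) }. -/
/-- `K` is a simplicial complex on the vertex set `Fin m`. -/
def IsSimplicialComplex {m : ℕ} (K : Finset (Finset (Fin m))) : Prop :=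
  (∀ I ∈ K, ∀ I' ⊆ I, I' ∈ K) ∧ ∅ ∈ K ∧ ∀ i : Fin m, ({i} : Finset (Fin m)) ∈ K

/-- `K` is flag: every set of vertices pairwise joined by `2`-element simplices
of `K` is itself a simplex of `K`. -/
def IsFlag {m : ℕ} (K : Finset (Finset (Fin m))) : Prop :=
  ∀ S : Finset (Fin m),
    (∀ i ∈ S, ∀ j ∈ S, i ≠ j → ({i, j} : Finset (Fin m)) ∈ K) → S ∈ K

/-- `a` and `b` lie in the same connected component of the graph of the full
subcomplex `K_J` (reachability along edges of `K` inside `J`). -/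
def connKJ {m : ℕ} (K : Finset (Finset (Fin m))) (J : Finset (Fin m)) :
    Fin m → Fin m → Prop :=
  Relation.ReflTransGen
    (fun a b => a ∈ J ∧ b ∈ J ∧ a ≠ b ∧ ({a, b} : Finset (Fin m)) ∈ K)

/-- `Θ_K(J)`: the set of vertices `j ∈ J` that are smallest in their connected
component of the graph of `K_J`, this component not containing `max J`. -/
def Theta {m : ℕ} (K : Finset (Finset (Fin m))) (J : Finset (Fin m)) (j : Fin m) : Prop :=
  ∃ hj : j ∈ J, (∀ i ∈ J, connKJ K J j i → j ≤ i) ∧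
    ¬ connKJ K J j (J.max' ⟨j, hj⟩)

section Aux
variable {R : Type*} {L : Type*} [CommRing R] [LieRing L] [LieAlgebra R L] {m : ℕ}

/-- nested bracket over a list -/
def Nst (q : Fin m → L) (l : List (Fin m)) (x : L) : L :=
  l.foldr (fun t acc => ⁅q t, acc⁆) x

@[simp] lemma Nst_nil (q : Fin m → L) (x : L) : Nst q [] x = x := rfl
@[simp] lemma Nst_cons (q : Fin m → L) (a : Fin m) (l : List (Fin m)) (x : L) :
    Nst q (a :: l) x = ⁅q a, Nst q l x⁆ := rfl

lemma Nst_append (q : Fin m → L) (l₁ l₂ : List (Fin m)) (x : L) :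
    Nst q (l₁ ++ l₂) x = Nst q l₁ (Nst q l₂ x) := by
  induction l₁ with
  | nil => rfl
  | cons a l ih => simp [ih]

lemma Nst_zero (q : Fin m → L) (l : List (Fin m)) : Nst q l (0 : L) = 0 := by
  induction l with
  | nil => rfl
  | cons a l ih => simp [ih]

lemma Nst_sub (q : Fin m → L) (l : List (Fin m)) (x y : L) :
    Nst q l (x - y) = Nst q l x - Nst q l y := by
  induction l with
  | nil => rfl
  | cons a l ih => simp [ih]

lemma Nst_neg (q : Fin m → L) (l : List (Fin m)) (x : L) :
    Nst q l (-x) = - Nst q l x := by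
  induction l with
  | nil => rfl
  | cons a l ih => simp [ih]

lemma Nst_flip (q : Fin m → L) (l : List (Fin m)) (a j : Fin m) :
    Nst q (l ++ [a]) (q j) = - Nst q (l ++ [j]) (q a) := by
  rw [Nst_append, Nst_append, ← Nst_neg]
  congr 1
  show ⁅q a, q j⁆ = -⁅q j, q a⁆
  rw [lie_skew]

lemma Nst_jac (q : Fin m → L) (l : List (Fin m)) (a b j : Fin m) :
    Nst q (l ++ [a, b]) (q j)
      = Nst q (l ++ [b, a]) (q j) - Nst q (l ++ [j, a]) (q b) := by
  rw [Nst_append, Nst_append, Nst_append, ← Nst_sub]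
  congr 1
  show ⁅q a, ⁅q b, q j⁆⁆ = ⁅q b, ⁅q a, q j⁆⁆ - ⁅q j, ⁅q a, q b⁆⁆
  rw [leibniz_lie (q a) (q b) (q j), ← lie_skew (⁅q a, q b⁆) (q j)]
  abel

lemma Nst_kill (q : Fin m → L) (l : List (Fin m)) {a j : Fin m}
    (h : ⁅q a, q j⁆ = 0) : Nst q (l ++ [a]) (q j) = 0 := by
  rw [Nst_append]
  show Nst q l (⁅q a, q j⁆) = 0
  rw [h, Nst_zero]

/-- span of brackets of two nested commutators with distinct letters in `P` -/
def BB (R : Type*) {L : Type*} [CommRing R] [LieRing L] [LieAlgebra R L] {m : ℕ}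
    (q : Fin m → L) (P : Finset (Fin m)) : Submodule R L :=
  Submodule.span R {x | ∃ s t : List (Fin m), ∃ u v : Fin m, s ≠ [] ∧ t ≠ [] ∧
    (s ++ u :: (t ++ [v])).Nodup ∧ (∀ y ∈ s ++ u :: (t ++ [v]), y ∈ P) ∧
    x = ⁅Nst q s (q u), Nst q t (q v)⁆}

lemma BB_mono {q : Fin m → L} {P P' : Finset (Fin m)} (h : P ⊆ P') :
    BB R q P ≤ BB R q P' := by
  apply Submodule.span_mono
  rintro x ⟨s, t, u, v, h1, h2, h3, h4, h5⟩
  exact ⟨s, t, u, v, h1, h2, h3, fun y hy => h (h4 y hy), h5⟩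

lemma BB_ad {q : Fin m → L} {P : Finset (Fin m)} {x : Fin m} (hx : x ∉ P) {d : L}
    (hd : d ∈ BB R q P) : ⁅q x, d⁆ ∈ BB R q (insert x P) := by
  have h1 : ⁅q x, d⁆ ∈ Submodule.map ((LieAlgebra.ad R L (q x)) : L →ₗ[R] L)
      (BB R q P) := by
    refine ⟨d, hd, ?_⟩
    simp [LieAlgebra.ad_apply]
  rw [BB, Submodule.map_span] at h1
  refine Submodule.span_le.mpr ?_ h1
  rintro _ ⟨g, ⟨s, t, u, v, hs, ht, hnd, hP, rfl⟩, rfl⟩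
  have hxnew : x ∉ s ++ u :: (t ++ [v]) := fun hmem => hx (hP x hmem)
  show ⁅q x, ⁅Nst q s (q u), Nst q t (q v)⁆⁆ ∈ _
  rw [leibniz_lie]
  refine add_mem (Submodule.subset_span ?_) (Submodule.subset_span ?_)
  · refine ⟨x :: s, t, u, v, by simp, ht, ?_, ?_, by rw [Nst_cons]⟩
    · rw [List.cons_append, List.nodup_cons]
      exact ⟨hxnew, hnd⟩
    · intro y hy
      by_cases hyx : y = x
      · exact hyx ▸ Finset.mem_insert_self x P
      · refine Finset.mem_insert_of_mem (hP y ?_)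
        simp only [List.cons_append, List.mem_cons, List.mem_append] at hy ⊢
        tauto
  · refine ⟨s, x :: t, u, v, hs, by simp, ?_, ?_, by rw [Nst_cons]⟩
    · have h2 : ((s ++ [u]) ++ x :: (t ++ [v])).Nodup := by
        rw [List.nodup_middle, List.nodup_cons]
        constructor
        · intro hmem
          apply hxnew
          simp only [List.mem_append, List.mem_cons, List.mem_singleton] at hmem ⊢
          tauto
        · simpa [List.append_assoc] using hnd
      simpa [List.append_assoc] using h2
    · intro y hy
      by_cases hyx : y = x
      · exact hyx ▸ Finset.mem_insert_self x P
      · refine Finset.mem_insert_of_mem (hP y ?_)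
        simp only [List.cons_append, List.mem_cons, List.mem_append] at hy ⊢
        tauto

lemma BB_le {q : Fin m → L} {n : ℕ} {A : LieSubalgebra R L} {P : Finset (Fin m)}
    (H : ∀ (l : List (Fin m)) (j : Fin m), l ≠ [] → (l ++ [j]).Nodup →
      l.length ≤ n → Nst q l (q j) ∈ A)
    (hcard : P.card ≤ n + 2) : ∀ d ∈ BB R q P, d ∈ A := by
  intro d hd
  have hle : BB R q P ≤ A.toSubmodule := by
    apply Submodule.span_le.mpr
    rintro _ ⟨s, t, u, v, hs, ht, hnd, hP, rfl⟩
    have hlen : (s ++ u :: (t ++ [v])).length ≤ P.card := by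
      classical
      calc (s ++ u :: (t ++ [v])).length = (s ++ u :: (t ++ [v])).toFinset.card := by
            rw [List.toFinset_card_of_nodup hnd]
        _ ≤ P.card := Finset.card_le_card (fun y hy => hP y (List.mem_toFinset.mp hy))
    have hlen' : s.length + t.length + 2 ≤ n + 2 := by
      simp only [List.length_append, List.length_cons, List.length_singleton] at hlen
      omega
    have hs1 : 1 ≤ s.length := List.length_pos_iff.mpr hs
    have ht1 : 1 ≤ t.length := List.length_pos_iff.mpr ht
    have hsu : Nst q s (q u) ∈ A := by
      refine H s u hs ?_ (by omega)
      refine List.Nodup.sublist ?_ hnd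
      refine List.Sublist.append_left ?_ s
      exact List.Sublist.cons₂ u (List.nil_sublist _)
    have htv : Nst q t (q v) ∈ A := by
      refine H t v ht ?_ (by omega)
      refine List.Nodup.sublist ?_ hnd
      refine List.Sublist.trans ?_ (List.sublist_append_right s _)
      exact List.sublist_cons_self u (t ++ [v])
    exact A.lie_mem hsu htv
  exact hle hd

lemma swap_diff (q : Fin m → L) :
    ∀ (p t : List (Fin m)) (a b v : Fin m), t ≠ [] →
    ((p ++ a :: b :: (t ++ [v])).Nodup) →
    Nst q (p ++ a :: b :: t) (q v) - Nst q (p ++ b :: a :: t) (q v)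
      ∈ BB R q (p ++ a :: b :: (t ++ [v])).toFinset := by
  intro p
  induction p with
  | nil =>
    intro t a b v ht hnd
    simp only [List.nil_append] at hnd ⊢
    have heq : Nst q (a :: b :: t) (q v) - Nst q (b :: a :: t) (q v)
        = ⁅Nst q [a] (q b), Nst q t (q v)⁆ := by
      simp only [Nst_cons, Nst_nil]
      rw [leibniz_lie (q a) (q b) (Nst q t (q v))]
      abel
    rw [heq]
    refine Submodule.subset_span ⟨[a], t, b, v, by simp, ht, by simpa using hnd, ?_, rfl⟩
    intro y hy
    rw [List.mem_toFinset]
    simpa using hy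
  | cons x p ih =>
    intro t a b v ht hnd
    rw [List.cons_append, List.nodup_cons] at hnd
    obtain ⟨hxmem, hnd'⟩ := hnd
    have h1 := ih t a b v ht hnd'
    have hx : x ∉ (p ++ a :: b :: (t ++ [v])).toFinset := by
      rw [List.mem_toFinset]; exact hxmem
    have h2 := BB_ad (R := R) hx h1
    have h3 : Nst q ((x :: p) ++ a :: b :: t) (q v) - Nst q ((x :: p) ++ b :: a :: t) (q v)
        = ⁅q x, Nst q (p ++ a :: b :: t) (q v) - Nst q (p ++ b :: a :: t) (q v)⁆ := by
      simp only [List.cons_append, Nst_cons, lie_sub]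
    rw [h3, List.cons_append, List.toFinset_cons]
    exact h2

lemma perm_diff (q : Fin m → L) {p₁ p₂ : List (Fin m)} (hp : p₁.Perm p₂) :
    ∀ (t : List (Fin m)) (v : Fin m), t ≠ [] → (p₁ ++ (t ++ [v])).Nodup →
    Nst q (p₁ ++ t) (q v) - Nst q (p₂ ++ t) (q v)
      ∈ BB R q (p₁ ++ (t ++ [v])).toFinset := by
  induction hp with
  | nil => intro t v ht hnd; simpa using zero_mem _
  | cons x hp ih =>
    rename_i l₁ l₂
    intro t v ht hnd
    rw [List.cons_append, List.nodup_cons] at hnd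
    obtain ⟨hxmem, hnd'⟩ := hnd
    have h1 := ih t v ht hnd'
    have hx : x ∉ (l₁ ++ (t ++ [v])).toFinset := by
      rw [List.mem_toFinset]; exact hxmem
    have h2 := BB_ad (R := R) hx h1
    have h3 : Nst q ((x :: l₁) ++ t) (q v) - Nst q ((x :: l₂) ++ t) (q v)
        = ⁅q x, Nst q (l₁ ++ t) (q v) - Nst q (l₂ ++ t) (q v)⁆ := by
      simp only [List.cons_append, Nst_cons, lie_sub]
    rw [h3, List.cons_append, List.toFinset_cons]
    exact h2
  | swap x y l =>
    intro t v ht hnd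
    have hlt : l ++ t ≠ [] := fun h => ht (List.append_eq_nil_iff.mp h).2
    have h := swap_diff (R := R) q [] (l ++ t) y x v hlt (by simpa [List.append_assoc] using hnd)
    simpa [List.append_assoc] using h
  | trans h12 h23 ih12 ih23 =>
    rename_i l₁ l₂ l₃
    intro t v ht hnd
    have e1 := ih12 t v ht hnd
    have hnd2 : (l₂ ++ (t ++ [v])).Nodup :=
      ((h12.append_right (t ++ [v])).nodup_iff).mp hnd
    have e2 := ih23 t v ht hnd2
    have hfs : (l₂ ++ (t ++ [v])).toFinset = (l₁ ++ (t ++ [v])).toFinset :=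
      (List.toFinset_eq_of_perm _ _ (h12.append_right (t ++ [v]))).symm
    rw [hfs] at e2
    have := add_mem e1 e2
    simpa [sub_add_sub_cancel] using this

end Aux

section Pair
variable {R : Type*} {L : Type*} [CommRing R] [LieRing L] [LieAlgebra R L] {m : ℕ}
variable {K : Finset (Finset (Fin m))} {q : Fin m → L} {A : LieSubalgebra R L}

lemma conn_symm {J : Finset (Fin m)} {a b : Fin m} (h : connKJ K J a b) : connKJ K J b a := by
  refine Std.Symm.symm (self := @Relation.ReflTransGen.stdSymm _ _ ⟨?_⟩) _ _ h
  rintro x y ⟨h1, h2, h3, h4⟩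
  exact ⟨h2, h1, h3.symm, by rwa [Finset.pair_comm]⟩

def pairE (q : Fin m → L) (I : Finset (Fin m)) (y c : Fin m) : L :=
  Nst q ((((I.erase c).erase y).sort (· ≤ ·)) ++ [y]) (q c)

lemma pairE_skew (q : Fin m → L) (I : Finset (Fin m)) (y c : Fin m) :
    pairE q I y c = - pairE q I c y := by
  rw [pairE, pairE, Finset.erase_right_comm (s := I) (a := y) (b := c)]
  exact Nst_flip q _ y c

lemma pairE_edge_zero (hcomm : ∀ i j : Fin m, ({i, j} : Finset (Fin m)) ∈ K → ⁅q i, q j⁆ = 0)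
    (I : Finset (Fin m)) {y c : Fin m} (h : ({y, c} : Finset (Fin m)) ∈ K) :
    pairE q I y c = 0 :=
  Nst_kill q _ (hcomm y c h)

lemma notmem_sort {S : Finset (Fin m)} {x : Fin m} (h : x ∉ S) : x ∉ S.sort (· ≤ ·) :=
  fun hmem => h ((Finset.mem_sort _).mp hmem)

lemma nodup_app1 {p : List (Fin m)} (hp : p.Nodup) {y : Fin m} (hy : y ∉ p) :
    (p ++ [y]).Nodup := by
  rw [List.nodup_append]
  refine ⟨hp, List.nodup_singleton y, ?_⟩
  intro a ha b hb
  rw [List.mem_singleton] at hb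
  subst hb
  rintro rfl
  exact hy ha

lemma nodup_app2 {p : List (Fin m)} (hp : p.Nodup) {y c : Fin m}
    (hy : y ∉ p) (hc : c ∉ p) (hyc : y ≠ c) : (p ++ ([y] ++ [c])).Nodup := by
  rw [List.nodup_append]
  refine ⟨hp, by simp [hyc], ?_⟩
  intro a ha b hb
  simp at hb
  rcases hb with rfl | rfl
  exacts [by rintro rfl; exact hy ha, by rintro rfl; exact hc ha]

lemma perm_sub_mem {I : Finset (Fin m)} (hB : ∀ d ∈ BB R q I, d ∈ A)
    {p₁ p₂ t : List (Fin m)} {v : Fin m}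
    (hp : p₁.Perm p₂) (ht : t ≠ []) (hnd : (p₁ ++ (t ++ [v])).Nodup)
    (hsub : ∀ x ∈ p₁ ++ (t ++ [v]), x ∈ I) :
    Nst q (p₁ ++ t) (q v) - Nst q (p₂ ++ t) (q v) ∈ A := by
  refine hB _ (BB_mono ?_ (perm_diff q hp t v ht hnd))
  intro x hx
  exact hsub x (List.mem_toFinset.mp hx)

lemma pairE_rel {I : Finset (Fin m)} (hB : ∀ d ∈ BB R q I, d ∈ A) {y c a : Fin m}
    (hy : y ∈ I) (hc : c ∈ I) (ha : a ∈ I)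
    (hyc : y ≠ c) (hay : a ≠ y) (hac : a ≠ c) :
    pairE q I y c - pairE q I a c + pairE q I a y ∈ A := by
  classical
  set T : List (Fin m) := ((((I.erase c).erase y).erase a).sort (· ≤ ·)) with hT
  have hTnd : T.Nodup := Finset.sort_nodup _ _
  have hmemT : ∀ x, x ∈ T ↔ (x ∈ I ∧ x ≠ c ∧ x ≠ y ∧ x ≠ a) := by
    intro x
    rw [hT, Finset.mem_sort, Finset.mem_erase, Finset.mem_erase, Finset.mem_erase]
    tauto
  have hyT : y ∉ T := fun h => ((hmemT y).mp h).2.2.1 rfl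
  have hcT : c ∉ T := fun h => ((hmemT c).mp h).2.1 rfl
  have haT : a ∉ T := fun h => ((hmemT a).mp h).2.2.2 rfl
  have hsubT : ∀ x ∈ T, x ∈ I := fun x h => ((hmemT x).mp h).1
  have hyEcy : y ∉ (I.erase c).erase y := Finset.notMem_erase _ _
  have hcEcy : c ∉ (I.erase c).erase y :=
    fun h => absurd (Finset.mem_of_mem_erase h) (Finset.notMem_erase c I)
  have haEcy : a ∈ (I.erase c).erase y :=
    Finset.mem_erase.mpr ⟨hay, Finset.mem_erase.mpr ⟨hac, ha⟩⟩
  -- D1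
  have hperm1 : ((((I.erase c).erase y)).sort (· ≤ ·)).Perm (T ++ [a]) := by
    refine List.perm_of_nodup_nodup_toFinset_eq (Finset.sort_nodup _ _)
      (nodup_app1 hTnd haT) ?_
    rw [Finset.sort_toFinset, List.toFinset_append, hT, Finset.sort_toFinset]
    rw [List.toFinset_cons, List.toFinset_nil]
    rw [Finset.union_comm]
    rw [Finset.insert_union, Finset.empty_union, Finset.insert_erase haEcy]
  have D1 : pairE q I y c - Nst q ((T ++ [a]) ++ [y]) (q c) ∈ A := by
    refine perm_sub_mem hB hperm1 (by simp) ?_ ?_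
    · exact nodup_app2 (Finset.sort_nodup _ _) (notmem_sort hyEcy) (notmem_sort hcEcy) hyc
    · intro x hx
      simp only [List.mem_append, List.singleton_append, List.mem_cons,
        List.mem_singleton, List.not_mem_nil, or_false] at hx
      rcases hx with hx | rfl | rfl
      · exact Finset.mem_of_mem_erase (Finset.mem_of_mem_erase ((Finset.mem_sort _).mp hx))
      · exact hy
      · exact hc
  rw [List.append_assoc, List.singleton_append] at D1
  -- D3
  have hperm3 : (T ++ [y]).Perm (((I.erase c).erase a).sort (· ≤ ·)) := by
    refine List.perm_of_nodup_nodup_toFinset_eq (nodup_app1 hTnd hyT)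
      (Finset.sort_nodup _ _) ?_
    rw [Finset.sort_toFinset, List.toFinset_append]
    ext x
    simp only [Finset.mem_union, List.mem_toFinset, List.toFinset_cons, List.toFinset_nil,
      insert_empty_eq, Finset.mem_singleton, Finset.mem_erase, hmemT x]
    constructor
    · rintro (⟨h1, h2, h3, h4⟩ | rfl)
      · exact ⟨h4, h2, h1⟩
      · exact ⟨Ne.symm hay, hyc, hy⟩
    · rintro ⟨h1, h2, h3⟩
      by_cases hxy : x = y
      · exact Or.inr hxy
      · exact Or.inl ⟨h3, h2, hxy, h1⟩
  have D3 : Nst q ((T ++ [y]) ++ [a]) (q c) - pairE q I a c ∈ A := by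
    refine perm_sub_mem hB hperm3 (by simp) ?_ ?_
    · refine nodup_app2 (nodup_app1 hTnd hyT) ?_ ?_ hac
      · simp only [List.mem_append, List.mem_singleton]
        rintro (h | h)
        exacts [haT h, hay h]
      · simp only [List.mem_append, List.mem_singleton]
        rintro (h | h)
        exacts [hcT h, hyc h.symm]
    · intro x hx
      simp only [List.mem_append, List.mem_singleton] at hx
      rcases hx with (hx | rfl) | rfl | rfl
      exacts [hsubT x hx, hy, ha, hc]
  rw [List.append_assoc, List.singleton_append] at D3
  -- D4
  have hperm4 : (T ++ [c]).Perm (((I.erase y).erase a).sort (· ≤ ·)) := by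
    refine List.perm_of_nodup_nodup_toFinset_eq (nodup_app1 hTnd hcT)
      (Finset.sort_nodup _ _) ?_
    rw [Finset.sort_toFinset, List.toFinset_append]
    ext x
    simp only [Finset.mem_union, List.mem_toFinset, List.toFinset_cons, List.toFinset_nil,
      insert_empty_eq, Finset.mem_singleton, Finset.mem_erase, hmemT x]
    constructor
    · rintro (⟨h1, h2, h3, h4⟩ | rfl)
      · exact ⟨h4, h3, h1⟩
      · exact ⟨Ne.symm hac, Ne.symm hyc, hc⟩
    · rintro ⟨h1, h2, h3⟩
      by_cases hxc : x = c
      · exact Or.inr hxc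
      · exact Or.inl ⟨h3, hxc, h2, h1⟩
  have D4 : Nst q ((T ++ [c]) ++ [a]) (q y) - pairE q I a y ∈ A := by
    refine perm_sub_mem hB hperm4 (by simp) ?_ ?_
    · refine nodup_app2 (nodup_app1 hTnd hcT) ?_ ?_ hay
      · simp only [List.mem_append, List.mem_singleton]
        rintro (h | h)
        exacts [haT h, hac h]
      · simp only [List.mem_append, List.mem_singleton]
        rintro (h | h)
        exacts [hyT h, hyc h]
    · intro x hx
      simp only [List.mem_append, List.mem_singleton] at hx
      rcases hx with (hx | rfl) | rfl | rfl
      exacts [hsubT x hx, hc, ha, hy]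
  rw [List.append_assoc, List.singleton_append] at D4
  have e2 := Nst_jac q T a y c
  have key : pairE q I y c - pairE q I a c + pairE q I a y
      = (pairE q I y c - Nst q (T ++ [a, y]) (q c))
        + ((Nst q (T ++ [y, a]) (q c) - pairE q I a c)
        - (Nst q (T ++ [c, a]) (q y) - pairE q I a y)) := by
    rw [e2]; abel
  rw [key]
  exact add_mem D1 (sub_mem D3 D4)

lemma pairE_slide_edge (hcomm : ∀ i j : Fin m, ({i, j} : Finset (Fin m)) ∈ K → ⁅q i, q j⁆ = 0)
    {I : Finset (Fin m)} (hB : ∀ d ∈ BB R q I, d ∈ A) {y b c' : Fin m}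
    (hy : y ∈ I) (hb : b ∈ I) (hc' : c' ∈ I)
    (hedge : ({b, c'} : Finset (Fin m)) ∈ K) (hbc' : b ≠ c')
    (hyb : y ≠ b) (hyc' : y ≠ c') :
    pairE q I y c' - pairE q I y b ∈ A := by
  have h := pairE_rel hB hy hc' hb hyc' (Ne.symm hyb) hbc'
  rw [pairE_edge_zero hcomm I hedge, pairE_skew q I b y] at h
  have key : pairE q I y c' - pairE q I y b
      = pairE q I y c' - 0 + - pairE q I y b := by abel
  rw [key]; exact h

lemma pairE_slide (hcomm : ∀ i j : Fin m, ({i, j} : Finset (Fin m)) ∈ K → ⁅q i, q j⁆ = 0)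
    {I : Finset (Fin m)} (hB : ∀ d ∈ BB R q I, d ∈ A) {y c c' : Fin m}
    (hy : y ∈ I) (hnc : ¬ connKJ K I y c) (hcc' : connKJ K I c c') (hyc : y ≠ c) :
    pairE q I y c - pairE q I y c' ∈ A := by
  induction hcc' with
  | refl => simpa using zero_mem A
  | @tail b c'' hpath hstep ih =>
    obtain ⟨hbI, hc''I, hbne, hKe⟩ := hstep
    have hyb : y ≠ b := by
      rintro rfl
      exact hnc (conn_symm hpath)
    have hyc'' : y ≠ c'' := by
      rintro rfl
      exact hnc (conn_symm (Relation.ReflTransGen.tail hpath ⟨hbI, hc''I, hbne, hKe⟩))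
    have h1 := pairE_slide_edge hcomm hB hy hbI hc''I hKe hbne hyb hyc''
    have key : pairE q I y c - pairE q I y c''
        = (pairE q I y c - pairE q I y b) - (pairE q I y c'' - pairE q I y b) := by abel
    rw [key]; exact sub_mem ih h1

lemma pairE_conn (hcomm : ∀ i j : Fin m, ({i, j} : Finset (Fin m)) ∈ K → ⁅q i, q j⁆ = 0)
    {I : Finset (Fin m)} (hB : ∀ d ∈ BB R q I, d ∈ A) {y c : Fin m}
    (hconn : connKJ K I y c) : y ≠ c → y ∈ I → pairE q I y c ∈ A := by
  induction hconn with
  | refl => intro h _; exact absurd rfl h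
  | @tail b c hpath hstep ih =>
    intro hyc hy
    obtain ⟨hbI, hcI, hbc, hKe⟩ := hstep
    by_cases hyb : y = b
    · subst hyb
      rw [pairE_edge_zero hcomm I hKe]
      exact zero_mem A
    · have h1 := pairE_rel hB hy hcI hbI hyc (Ne.symm hyb) hbc
      rw [pairE_edge_zero hcomm I hKe, pairE_skew q I b y] at h1
      have h2 : pairE q I y b ∈ A := ih hyb hy
      have key : pairE q I y c = (pairE q I y c - 0 + - pairE q I y b) + pairE q I y b := by
        abel
      rw [key]; exact add_mem h1 h2

lemma theta_exists {I : Finset (Fin m)} (hI : I.Nonempty) {c : Fin m} (hc : c ∈ I)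
    (hnc : ¬ connKJ K I c (I.max' hI)) :
    ∃ c', Theta K I c' ∧ connKJ K I c c' ∧ c' ∈ I ∧ c' ≠ I.max' hI := by
  classical
  have hcComp : c ∈ I.filter (fun i => connKJ K I c i) := by
    rw [Finset.mem_filter]
    exact ⟨hc, Relation.ReflTransGen.refl⟩
  set Comp := I.filter (fun i => connKJ K I c i) with hComp
  have hne : Comp.Nonempty := ⟨c, hcComp⟩
  have hmin : Comp.min' hne ∈ Comp := Finset.min'_mem _ _
  obtain ⟨hminI, hminconn⟩ := Finset.mem_filter.mp hmin
  refine ⟨Comp.min' hne, ⟨hminI, ?_, ?_⟩, hminconn, hminI, ?_⟩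
  · intro i hi hconn
    have hiC : i ∈ Comp := by
      rw [hComp, Finset.mem_filter]
      exact ⟨hi, Relation.ReflTransGen.trans hminconn hconn⟩
    exact Finset.min'_le _ _ hiC
  · intro h
    exact hnc (Relation.ReflTransGen.trans hminconn h)
  · intro heq
    rw [heq] at hminconn
    exact hnc hminconn

lemma sort_erase_max' (S : Finset (Fin m)) (hS : S.Nonempty) :
    S.sort (· ≤ ·) = (S.erase (S.max' hS)).sort (· ≤ ·) ++ [S.max' hS] := by
  refine (fun hp hs2 => List.Perm.eq_of_pairwise' (Finset.pairwise_sort _ _) hs2 hp) ?_ ?_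
  · refine List.perm_of_nodup_nodup_toFinset_eq (Finset.sort_nodup _ _)
      (nodup_app1 (Finset.sort_nodup _ _) (notmem_sort (Finset.notMem_erase _ _))) ?_
    rw [Finset.sort_toFinset, List.toFinset_append, Finset.sort_toFinset,
      List.toFinset_cons, List.toFinset_nil, Finset.union_comm,
      Finset.insert_union, Finset.empty_union, Finset.insert_erase (Finset.max'_mem S hS)]
  · refine List.pairwise_append.mpr ⟨Finset.pairwise_sort _ _, List.pairwise_singleton _ _, ?_⟩
    intro x hx b hb
    rw [List.mem_singleton] at hb
    subst hb
    exact Finset.le_max' S x (Finset.mem_of_mem_erase ((Finset.mem_sort _).mp hx))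

lemma max'_erase {I : Finset (Fin m)} {c' : Fin m} (hne2 : (I.erase c').Nonempty)
    (hI : I.Nonempty) (hc : c' ≠ I.max' hI) : (I.erase c').max' hne2 = I.max' hI := by
  refine le_antisymm ?_ ?_
  · exact Finset.max'_le _ _ _ (fun x hx => Finset.le_max' _ _ (Finset.mem_of_mem_erase hx))
  · exact Finset.le_max' _ _ (Finset.mem_erase.mpr ⟨Ne.symm hc, Finset.max'_mem _ _⟩)

lemma pairE_theta_mem
    (hgen : {z : L | ∃ (J : Finset (Fin m)) (j' : Fin m),
      Theta K J j' ∧ z = cNest q (J.erase j') (q j')} ⊆ (A : Set L))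
    {I : Finset (Fin m)} {c' : Fin m} (hθ : Theta K I c') (hne2 : (I.erase c').Nonempty) :
    pairE q I ((I.erase c').max' hne2) c' ∈ A := by
  have heq : pairE q I ((I.erase c').max' hne2) c' = cNest q (I.erase c') (q c') := by
    rw [pairE, cNest, sort_erase_max' (I.erase c') hne2]
    rfl
  rw [heq]
  exact hgen ⟨I, c', hθ, rfl⟩

lemma pairE_main1 (hcomm : ∀ i j : Fin m, ({i, j} : Finset (Fin m)) ∈ K → ⁅q i, q j⁆ = 0)
    (hgen : {z : L | ∃ (J : Finset (Fin m)) (j' : Fin m),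
      Theta K J j' ∧ z = cNest q (J.erase j') (q j')} ⊆ (A : Set L))
    {I : Finset (Fin m)} (hB : ∀ d ∈ BB R q I, d ∈ A) (hI : I.Nonempty) {y c : Fin m}
    (hy : y ∈ I) (hc : c ∈ I) (hyc : y ≠ c)
    (hnc : ¬ connKJ K I y c) (hcz : ¬ connKJ K I c (I.max' hI)) :
    pairE q I y c ∈ A := by
  obtain ⟨c', hθ, hconncc', hc'I, hc'z⟩ := theta_exists hI hc hcz
  have hzI : I.max' hI ∈ I := Finset.max'_mem _ _
  have hyc' : y ≠ c' := by
    rintro rfl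
    exact hnc (conn_symm hconncc')
  have hne2 : (I.erase c').Nonempty := ⟨I.max' hI, Finset.mem_erase.mpr ⟨Ne.symm hc'z, hzI⟩⟩
  have hmax : (I.erase c').max' hne2 = I.max' hI := max'_erase hne2 hI hc'z
  have hgen1 : pairE q I (I.max' hI) c' ∈ A := by
    have h := pairE_theta_mem hgen hθ hne2
    rwa [hmax] at h
  have hstep1 : pairE q I y c - pairE q I y c' ∈ A :=
    pairE_slide hcomm hB hy hnc hconncc' hyc
  by_cases hyz : y = I.max' hI
  · have key : pairE q I y c = (pairE q I y c - pairE q I y c') + pairE q I y c' := by abel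
    rw [key]
    refine add_mem hstep1 ?_
    rw [hyz]; exact hgen1
  · have hrel := pairE_rel hB hy hc'I hzI hyc' (Ne.symm hyz) (Ne.symm hc'z)
    have hzy : pairE q I (I.max' hI) y ∈ A := by
      by_cases hconnzy : connKJ K I (I.max' hI) y
      · exact pairE_conn hcomm hB hconnzy (Ne.symm hyz) hzI
      · have hnyz : ¬ connKJ K I y (I.max' hI) := fun h => hconnzy (conn_symm h)
        obtain ⟨y', hθ', hconnyy', hy'I, hy'z⟩ := theta_exists hI hy hnyz
        have hslide := pairE_slide hcomm hB hzI hconnzy hconnyy' (Ne.symm hyz)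
        have hne2' : (I.erase y').Nonempty := ⟨I.max' hI, Finset.mem_erase.mpr ⟨Ne.symm hy'z, hzI⟩⟩
        have hmax' : (I.erase y').max' hne2' = I.max' hI := max'_erase hne2' hI hy'z
        have hgen2 : pairE q I (I.max' hI) y' ∈ A := by
          have h := pairE_theta_mem hgen hθ' hne2'
          rwa [hmax'] at h
        have key : pairE q I (I.max' hI) y
            = (pairE q I (I.max' hI) y - pairE q I (I.max' hI) y')
              + pairE q I (I.max' hI) y' := by abel
        rw [key]; exact add_mem hslide hgen2
    have key : pairE q I y c = (pairE q I y c - pairE q I y c')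
        + ((pairE q I y c' - pairE q I (I.max' hI) c' + pairE q I (I.max' hI) y)
           + pairE q I (I.max' hI) c' - pairE q I (I.max' hI) y) := by abel
    rw [key]
    exact add_mem hstep1 (sub_mem (add_mem hrel hgen1) hzy)

lemma pairE_all (hcomm : ∀ i j : Fin m, ({i, j} : Finset (Fin m)) ∈ K → ⁅q i, q j⁆ = 0)
    (hgen : {z : L | ∃ (J : Finset (Fin m)) (j' : Fin m),
      Theta K J j' ∧ z = cNest q (J.erase j') (q j')} ⊆ (A : Set L))
    {I : Finset (Fin m)} (hB : ∀ d ∈ BB R q I, d ∈ A) (hI : I.Nonempty) {y c : Fin m}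
    (hy : y ∈ I) (hc : c ∈ I) (hyc : y ≠ c) : pairE q I y c ∈ A := by
  by_cases hconn : connKJ K I y c
  · exact pairE_conn hcomm hB hconn hyc hy
  · by_cases hcz : connKJ K I c (I.max' hI)
    · have hnc' : ¬ connKJ K I c y := fun h => hconn (conn_symm h)
      have hyz : ¬ connKJ K I y (I.max' hI) := fun h =>
        hconn (Relation.ReflTransGen.trans h (conn_symm hcz))
      have h := pairE_main1 hcomm hgen hB hI hc hy (Ne.symm hyc) hnc' hyz
      rw [pairE_skew]
      exact neg_mem h
    · exact pairE_main1 hcomm hgen hB hI hy hc hyc hconn hcz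

lemma master (hcomm : ∀ i j : Fin m, ({i, j} : Finset (Fin m)) ∈ K → ⁅q i, q j⁆ = 0)
    (hgen : {z : L | ∃ (J : Finset (Fin m)) (j' : Fin m),
      Theta K J j' ∧ z = cNest q (J.erase j') (q j')} ⊆ (A : Set L)) :
    ∀ (n : ℕ) (l : List (Fin m)) (j : Fin m), l ≠ [] → (l ++ [j]).Nodup →
      l.length ≤ n → Nst q l (q j) ∈ A := by
  intro n
  induction n with
  | zero =>
    intro l j hl _ hlen
    cases l with
    | nil => exact absurd rfl hl
    | cons a l => simp at hlen
  | succ n ih =>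
    intro l j hl hnd hlen
    classical
    obtain rfl | ⟨p, y, rfl⟩ := List.eq_nil_or_concat l
    · exact absurd rfl hl
    simp only [List.concat_eq_append] at hnd hlen ⊢
    have hnd0 := hnd
    set I : Finset (Fin m) := ((p ++ [y]) ++ [j]).toFinset with hIdef
    have hB : ∀ d ∈ BB R q I, d ∈ A := by
      refine BB_le ih ?_
      calc I.card ≤ ((p ++ [y]) ++ [j]).length := List.toFinset_card_le _
        _ ≤ n + 2 := by
          simp only [List.length_append, List.length_singleton]
          simp only [List.length_append, List.length_singleton] at hlen
          omega
    rw [List.nodup_append] at hnd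
    obtain ⟨hnd1, _, hdisj⟩ := hnd
    have hyj : y ≠ j := by
      intro h
      exact hdisj y (by simp) j (by simp) h
    have hjp : j ∉ p := by
      intro h
      exact hdisj j (by simp [h]) j (by simp) rfl
    rw [List.nodup_append] at hnd1
    obtain ⟨hpnd, _, hdisj1⟩ := hnd1
    have hyp : y ∉ p := by
      intro h
      exact hdisj1 y h y (by simp) rfl
    have hyI : y ∈ I := by rw [hIdef]; simp
    have hjI : j ∈ I := by rw [hIdef]; simp
    have hpfin : p.toFinset = (I.erase j).erase y := by
      ext x
      rw [Finset.mem_erase, Finset.mem_erase, hIdef]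
      simp only [List.mem_toFinset, List.toFinset_append, Finset.mem_union, List.toFinset_cons,
        List.toFinset_nil, insert_empty_eq, Finset.mem_singleton]
      constructor
      · intro hx
        exact ⟨fun h => hyp (h ▸ hx), fun h => hjp (h ▸ hx), Or.inl (Or.inl hx)⟩
      · rintro ⟨h1, h2, (hx | rfl) | rfl⟩
        · exact hx
        · exact absurd rfl h1
        · exact absurd rfl h2
    have hperm : p.Perm (((I.erase j).erase y).sort (· ≤ ·)) := by
      refine List.perm_of_nodup_nodup_toFinset_eq hpnd (Finset.sort_nodup _ _) ?_
      rw [Finset.sort_toFinset, hpfin]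
    have hD := perm_diff (R := R) q hperm [y] j (by simp)
      (by simpa [List.append_assoc] using hnd0)
    have hsetq : (p ++ ([y] ++ [j])).toFinset = I := by
      rw [hIdef, ← List.append_assoc]
    rw [hsetq] at hD
    have hD' : Nst q (p ++ [y]) (q j) - pairE q I y j ∈ A := hB _ hD
    have hpair : pairE q I y j ∈ A := pairE_all hcomm hgen hB ⟨j, hjI⟩ hyI hjI hyj
    have key : Nst q (p ++ [y]) (q j)
        = (Nst q (p ++ [y]) (q j) - pairE q I y j) + pairE q I y j := by abel
    rw [key]
    exact add_mem hD' hpair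

end Pair

/-- Let `K` be a flag simplicial complex on `[m]`, `L` a Lie
algebra over a commutative ring, and `q₁,…,q_m ∈ L` with `⁅qᵢ, qⱼ⁆ = 0` for
every `{i,j} ∈ K`.  Then every nested commutator without repeats lies in the
Lie subalgebra of `L` generated by the GPTW generators
`{c_q(J∖{j'}, q_{j'}) : J ⊆ [m], j' ∈ Θ_K(J)}`. -/
theorem nestedCommutator_mem_GPTW_lieSpan {R : Type*} {L : Type*} [CommRing R]
    [LieRing L] [LieAlgebra R L] {m : ℕ} (K : Finset (Finset (Fin m)))
    (hK : IsSimplicialComplex K) (hflag : IsFlag K)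
    (q : Fin m → L)
    (hcomm : ∀ i j : Fin m, ({i, j} : Finset (Fin m)) ∈ K → ⁅q i, q j⁆ = 0)
    (k : ℕ) (hk : 1 ≤ k) (is : Fin k → Fin m) (j : Fin m)
    (hdist : Function.Injective is) (hj : ∀ t, is t ≠ j) :
    (List.ofFn is).foldr (fun t acc => ⁅q t, acc⁆) (q j) ∈
      LieSubalgebra.lieSpan R L
        {z | ∃ (J : Finset (Fin m)) (j' : Fin m),
          Theta K J j' ∧ z = cNest q (J.erase j') (q j')} := by
  have hl : List.ofFn is ≠ [] := by
    intro h
    have h2 := congrArg List.length h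
    simp at h2
    omega
  have hnd : (List.ofFn is ++ [j]).Nodup := by
    rw [List.nodup_append]
    refine ⟨List.nodup_ofFn.mpr hdist, List.nodup_singleton _, ?_⟩
    intro x hx b hb
    rw [List.mem_singleton] at hb
    subst hb
    rintro rfl
    obtain ⟨t, ht⟩ := List.mem_ofFn.mp hx
    exact hj t ht
  exact master hcomm (LieSubalgebra.subset_lieSpan) k (List.ofFn is) j hl hnd (by simp)
end

section
/- Let K be a flag simplicial complex on [m] with RC_K the associated right-angled Coxeter group with generators g_1,…,g_m. Let k ≥ 1, let i_1,…,i_k, j ∈ [m] be arbitrary indices, and let c := (g_{i_1}, (g_{i_2}, …, (g_{i_k}, g_j)…)) be the nested group commutator of length k+1, where (x,y) = x⁻¹y⁻¹xy. Then (g_{i_1}, c) · c⁻² ∈ γ_{k+3}(RC_K). (Equivalently, in the associated graded Lie algebra, [ḡ_{i_1}, x] = h(x) for the nested commutator x of length k+1 beginning with ḡ_{i_1}, where h is the squaring operation.) -/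
/-- The relations of the right-angled Coxeter group associated with a
simplicial complex `K` on `[m]`. -/
def RCrels {m : ℕ} (K : Finset (Finset (Fin m))) : Set (FreeGroup (Fin m)) :=
  (Set.range fun i : Fin m => FreeGroup.of i * FreeGroup.of i) ∪
    {z | ∃ i j : Fin m, ({i, j} : Finset (Fin m)) ∈ K ∧
      z = FreeGroup.of i * FreeGroup.of j * (FreeGroup.of i)⁻¹ * (FreeGroup.of j)⁻¹}

/-- The right-angled Coxeter group `RC_K`. -/
def RC {m : ℕ} (K : Finset (Finset (Fin m))) : Type := PresentedGroup (RCrels K)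

instance {m : ℕ} (K : Finset (Finset (Fin m))) : Group (RC K) := by
  unfold RC; infer_instance

/-- The generators `g₁, …, g_m` of `RC_K`. -/
def RCgen {m : ℕ} (K : Finset (Finset (Fin m))) (i : Fin m) : RC K :=
  PresentedGroup.of (rels := RCrels K) i

/-- `γ_k(G)` for `k ≥ 1`, the lower central series in its classical indexing. -/
def gamma (G : Type*) [Group G] (k : ℕ) : Subgroup G := Subgroup.lowerCentralSeries (⊤ : Subgroup G) (k - 1)

/-- The group commutator `(x, y) = x⁻¹y⁻¹xy`. -/
def grpComm {G : Type*} [Group G] (x y : G) : G := x⁻¹ * y⁻¹ * x * y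

/-- Let `K` be a flag simplicial complex on `[m]`, let
`k ≥ 1`, let `i₁,…,i_k, j ∈ [m]` be arbitrary, and let
`c = (g_{i₁}, (g_{i₂}, …, (g_{i_k}, g_j)…))` be the nested group commutator of
length `k+1`.  Then `(g_{i₁}, c) · c⁻² ∈ γ_{k+3}(RC_K)`.  (In the associated
graded Lie algebra, `[ḡ_{i₁}, x] = h(x)` for a nested commutator `x`
beginning with `ḡ_{i₁}`.) -/
theorem grpComm_head_nested_eq_square {m : ℕ} (K : Finset (Finset (Fin m)))
    (hsub : ∀ I ∈ K, ∀ I' ⊆ I, I' ∈ K) (hempty : ∅ ∈ K)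
    (hsingle : ∀ i : Fin m, ({i} : Finset (Fin m)) ∈ K) (hflag : IsFlag K)
    (k : ℕ) (hk : 1 ≤ k) (is : Fin k → Fin m) (j : Fin m) :
    grpComm (RCgen K (is ⟨0, hk⟩))
        ((List.ofFn is).foldr (fun t acc => grpComm (RCgen K t) acc) (RCgen K j)) *
      (((List.ofFn is).foldr (fun t acc => grpComm (RCgen K t) acc) (RCgen K j)) ^ 2)⁻¹
      ∈ gamma (RC K) (k + 3) := by
  obtain ⟨k, rfl⟩ : ∃ n, k = n + 1 := ⟨k - 1, (Nat.succ_pred_eq_of_pos hk).symm⟩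
  have hg : RCgen K (is ⟨0, hk⟩) * RCgen K (is ⟨0, hk⟩) = 1 := by
    have hmem : (FreeGroup.of (is ⟨0, hk⟩) * FreeGroup.of (is ⟨0, hk⟩)) ∈
        Subgroup.normalClosure (RCrels K) :=
      Subgroup.subset_normalClosure (Or.inl ⟨is ⟨0, hk⟩, rfl⟩)
    exact (QuotientGroup.eq_one_iff _).mpr hmem
  have hg' : (RCgen K (is ⟨0, hk⟩))⁻¹ = RCgen K (is ⟨0, hk⟩) :=
    inv_eq_of_mul_eq_one_right hg
  rw [List.ofFn_succ, List.foldr_cons]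
  set g := RCgen K (is ⟨0, hk⟩) with hgdef
  set d := (List.ofFn fun i : Fin k => is i.succ).foldr
      (fun t acc => grpComm (RCgen K t) acc) (RCgen K j) with hd
  have h0 : is (0 : Fin (k+1)) = is ⟨0, hk⟩ := rfl
  have key : grpComm g (grpComm g d) * ((grpComm g d) ^ 2)⁻¹ = 1 := by
    simp only [grpComm, pow_two, hg', mul_inv_rev, inv_inv]
    group
    have hgx : ∀ x : RC K, g * (g * x) = x := by
      intro x; rw [← mul_assoc, hg, one_mul]
    simp only [zpow_neg_one, zpow_one, pow_one, mul_assoc, hgx, inv_mul_cancel_left,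
      mul_inv_cancel_left, hg, mul_one, inv_mul_cancel, mul_inv_cancel]
  rw [h0, key]
  exact Subgroup.one_mem _
end
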